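/- Let f₁, ..., f_K be probability densities on ℝᵈ with priors p₁, ..., p_K > 0 summing to 1. Fix a class k, let p_g = Σ_{l≠k} p_l and g_k(x) = (Σ_{l≠k} p_l f_l(x))/p_g. Then Q_{e,k} := ∫ min{p_k f_k(x), p_g g_k(x)} dx is less than or equal to the One-vs-Rest Bayes error rate P_{e,k} := ∫_{max_{l≠k} p_l f_l(x) ≥ p_k f_k(x)} p_k f_k(x) dx + Σ_{c≠k} ∫_{max_{l≠k} p_l f_l(x) < p_k f_k(x)} p_c f_c(x) dx. -/

import Mathlib

open MeasureTheory

theorem stmt_5 {d K : ℕ} (hK : 1 < K)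
    (f : Fin K → (Fin d → ℝ) → ℝ) (p : Fin K → ℝ)
    (hmeas : ∀ c, Measurable (f c)) (hnn : ∀ c x, 0 ≤ f c x)
    (hint : ∀ c, Integrable (f c)) (hI : ∀ c, ∫ x, f c x = 1)
    (hp : ∀ c, 0 < p c) (hsum : ∑ c, p c = 1)
    (k : Fin K) (hne : (Finset.univ.erase k).Nonempty) :
    ∫ x, min (p k * f k x)
        ((∑ l ∈ Finset.univ.erase k, p l) *
          ((∑ l ∈ Finset.univ.erase k, p l * f l x) / (∑ l ∈ Finset.univ.erase k, p l))) ≤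
      (∫ x in {x | p k * f k x ≤ (Finset.univ.erase k).sup' hne fun l => p l * f l x},
          p k * f k x) +
      ∑ c ∈ Finset.univ.erase k,
        ∫ x in {x | ((Finset.univ.erase k).sup' hne fun l => p l * f l x) < p k * f k x},
          p c * f c x := by
  generalize hs : Finset.univ.erase k = s at hne ⊢
  have hpg : (0:ℝ) < ∑ l ∈ s, p l :=
    Finset.sum_pos (fun l _ => hp l) hne
  have hred : ∀ x, (∑ l ∈ s, p l) * ((∑ l ∈ s, p l * f l x) / (∑ l ∈ s, p l))
      = ∑ l ∈ s, p l * f l x := by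
    intro x; field_simp
  simp only [hred]
  set g : (Fin d → ℝ) → ℝ := fun x => p k * f k x with hg
  set h : (Fin d → ℝ) → ℝ := fun x => ∑ l ∈ s, p l * f l x with hh
  set u : (Fin d → ℝ) → ℝ := fun x => s.sup' hne fun l => p l * f l x with hu
  have hgmeas : Measurable g := (hmeas k).const_mul _
  have humeas : Measurable u := by
    have := Finset.measurable_sup' hne (fun l (_ : l ∈ s) => ((hmeas l).const_mul (p l)))
    have heq : u = s.sup' hne (fun l x => p l * f l x) := by
      ext x; simp [hu, Finset.sup'_apply]
    rw [heq]; exact this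
  have hgint : Integrable g := (hint k).const_mul _
  have hhint : Integrable h :=
    integrable_finset_sum s (fun l _ => (hint l).const_mul _)
  have hmin_meas : Measurable fun x => min (g x) (h x) :=
    hgmeas.min (Finset.measurable_sum s (fun l _ => (hmeas l).const_mul _))
  have hgnn : ∀ x, 0 ≤ g x := fun x => mul_nonneg (hp k).le (hnn k x)
  have hhnn : ∀ x, 0 ≤ h x := fun x =>
    Finset.sum_nonneg fun l _ => mul_nonneg (hp l).le (hnn l x)
  have hmin_int : Integrable fun x => min (g x) (h x) := by
    refine hgint.mono hmin_meas.aestronglyMeasurable (Filter.Eventually.of_forall fun x => ?_)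
    rw [Real.norm_eq_abs, Real.norm_eq_abs, abs_of_nonneg (hgnn x),
      abs_of_nonneg (le_min (hgnn x) (hhnn x))]
    exact min_le_left _ _
  have hA : MeasurableSet {x | g x ≤ u x} := measurableSet_le hgmeas humeas
  have hcompl : {x | g x ≤ u x}ᶜ = {x | u x < g x} := by
    ext x; simp [not_le]
  have hsplit : (∫ x, min (g x) (h x)) =
      (∫ x in {x | g x ≤ u x}, min (g x) (h x)) +
      ∫ x in {x | u x < g x}, min (g x) (h x) := by
    rw [← hcompl, integral_add_compl hA hmin_int]
  rw [hsplit]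
  apply add_le_add
  · refine setIntegral_mono_on (hmin_int.integrableOn) (hgint.integrableOn) hA
      (fun x _ => min_le_left _ _)
  · have : ∑ c ∈ s, ∫ x in {x | u x < g x}, p c * f c x =
        ∫ x in {x | u x < g x}, h x := by
      rw [← integral_finset_sum s (fun l _ => ((hint l).const_mul _).integrableOn)]
    change _ ≤ ∑ c ∈ s, ∫ x in {x | u x < g x}, p c * f c x
    rw [this]
    refine setIntegral_mono_on (hmin_int.integrableOn) (hhint.integrableOn)
      (hcompl ▸ hA.compl) (fun x _ => min_le_right _ _)
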